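/- Every copula model satisfies Invariant Aggregation: if f is a model such that there exists a copula C with F_{f(p)}(s) = C(F_{p₁}(s₁),...,F_{pₙ}(sₙ)) for all marginal tuples p and all s, then for all i, all j in [zᵢ−1], and all s, f(T_i^j(p))(s) = f(p)(s)·𝟙{sᵢ ≤ j} + f(p)(s + eⁱ)·𝟙{sᵢ ≥ j}. -/

import Mathlib

open MeasureTheory Finset Function

noncomputable section

/-- The uniform probability measure on `[0,1] ⊆ ℝ`. -/
def unif01 : Measure ℝ := volume.restrict (Set.Icc 0 1)

/-- `q` is a probability mass function on `[w] = {1,…,w}`. -/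
def IsPMF (w : ℕ) (q : ℕ → ℝ) : Prop :=
  (∀ t, 0 ≤ q t) ∧ (∀ t, t ∉ Finset.Icc 1 w → q t = 0) ∧
    ∑ t ∈ Finset.Icc 1 w, q t = 1

/-- Collapse of adjacent bins `j` and `j+1`: `q^j(t) = q(t)·1{t ≤ j} + q(t+1)·1{t ≥ j}`. -/
def collapsePM (j : ℕ) (q : ℕ → ℝ) : ℕ → ℝ :=
  fun t => (if t ≤ j then q t else 0) + (if j ≤ t then q (t + 1) else 0)

/-- CDF of a pmf on `{1,…,w}`. -/
def pmfCDF (q : ℕ → ℝ) (t : ℕ) : ℝ := ∑ s ∈ Finset.Icc 1 t, q s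

/-- The product box `∏ᵢ {1,…,zᵢ}`. -/
def prodBox {n : ℕ} (z : Fin n → ℕ) : Finset (Fin n → ℕ) :=
  Fintype.piFinset fun i => Finset.Icc 1 (z i)

/-- `μ` is a joint pmf on `∏ᵢ {1,…,zᵢ}`. -/
def IsJointPMF {n : ℕ} (z : Fin n → ℕ) (μ : (Fin n → ℕ) → ℝ) : Prop :=
  (∀ s, 0 ≤ μ s) ∧ (∀ s, s ∉ prodBox z → μ s = 0) ∧ ∑ s ∈ prodBox z, μ s = 1

/-- The `i`-th marginal of a joint pmf. -/
def jointMarginal {n : ℕ} (z : Fin n → ℕ) (μ : (Fin n → ℕ) → ℝ) (i : Fin n) (t : ℕ) : ℝ :=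
  ∑ s ∈ (prodBox z).filter fun s => s i = t, μ s

/-- Joint CDF of a joint pmf. -/
def jointCDF {n : ℕ} (μ : (Fin n → ℕ) → ℝ) (s : Fin n → ℕ) : ℝ :=
  ∑ t ∈ Fintype.piFinset fun i => Finset.Icc 1 (s i), μ t

/-- A (candidate) model: assigns to each `z` and tuple of marginals a joint pmf. -/
abbrev Model (n : ℕ) := (z : Fin n → ℕ) → (Fin n → ℕ → ℝ) → (Fin n → ℕ) → ℝ

/-- `f` is a model: it returns a joint pmf whose marginals are the inputs. -/
def IsModel {n : ℕ} (f : Model n) : Prop :=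
  ∀ z p, (∀ i, IsPMF (z i) (p i)) →
    IsJointPMF z (f z p) ∧ ∀ i t, jointMarginal z (f z p) i t = p i t

/-- Invariant Aggregation: merging adjacent bins `j, j+1` of marginal `i`
does not affect the joint distribution over unaffected values. -/
def SatisfiesIA {n : ℕ} (f : Model n) : Prop :=
  ∀ z p, (∀ i, IsPMF (z i) (p i)) → ∀ i : Fin n, ∀ j ∈ Finset.Icc 1 (z i - 1),
    ∀ s ∈ prodBox (Function.update z i (z i - 1)),
      f (Function.update z i (z i - 1)) (Function.update p i (collapsePM j (p i))) s =
        (if s i ≤ j then f z p s else 0) +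
          (if j ≤ s i then f z p (Function.update s i (s i + 1)) else 0)

/-- A copula measure: a probability measure on `[0,1]^ι` with standard uniform marginals. -/
def IsCopulaMeasure {ι : Type*} [Fintype ι] (μ : Measure (ι → ℝ)) : Prop :=
  IsProbabilityMeasure μ ∧ ∀ i : ι, μ.map (fun t => t i) = unif01

/-- `C` is a copula: the CDF of a probability measure with uniform marginals. -/
def IsCopula {ι : Type*} [Fintype ι] (C : (ι → ℝ) → ℝ) : Prop :=
  ∃ μ : Measure (ι → ℝ), IsCopulaMeasure μ ∧
    ∀ x : ι → ℝ, (∀ i, x i ∈ Set.Icc (0 : ℝ) 1) →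
      (μ {t | ∀ i, t i ≤ x i}).toReal = C x

/-- `f` is a copula model with copula `C`: `F_{f(p)}(s) = C(F_{p₁}(s₁),…,F_{pₙ}(sₙ))`. -/
def IsCopulaModelWith {n : ℕ} (f : Model n) (C : (Fin n → ℝ) → ℝ) : Prop :=
  IsCopula C ∧ ∀ z p, (∀ i, IsPMF (z i) (p i)) → ∀ s ∈ prodBox z,
    jointCDF (f z p) s = C fun i => pmfCDF (p i) (s i)

/-- The binary distribution `b_t` on `{1,2}` with `b_t(1) = t`, `b_t(2) = 1 - t`. -/
def binPMF (t : ℝ) : ℕ → ℝ := fun s => if s = 1 then t else if s = 2 then 1 - t else 0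

/-- `σ` is a permutation of `{1,…,w}` (fixing everything else). -/
def PermOn (w : ℕ) (σ : Equiv.Perm ℕ) : Prop := ∀ t ∉ Finset.Icc 1 w, σ t = t

/-- `M`-neutrality for `M = {i : (i : ℕ) < m}`: relabelling the bins of a marginal in `M`
just relabels the joint distribution accordingly. -/
def MNeutral {n : ℕ} (f : Model n) (m : ℕ) : Prop :=
  ∀ z p, (∀ i, IsPMF (z i) (p i)) → ∀ i : Fin n, (i : ℕ) < m →
    ∀ σ : Equiv.Perm ℕ, PermOn (z i) σ → ∀ s ∈ prodBox z,
      f z (Function.update p i fun t => p i (σ t)) s =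
        f z p (Function.update s i (σ (s i)))

/-- A coupling of two pmfs `q₁` on `[w₁]`, `q₂` on `[w₂]`. -/
def IsCoupling (w₁ w₂ : ℕ) (q₁ q₂ : ℕ → ℝ) (μ : ℕ × ℕ → ℝ) : Prop :=
  (∀ a, 0 ≤ μ a) ∧ (∀ a, a ∉ (Finset.Icc 1 w₁) ×ˢ (Finset.Icc 1 w₂) → μ a = 0) ∧
    (∀ s, ∑ t ∈ Finset.Icc 1 w₂, μ (s, t) = q₁ s) ∧
    (∀ t, ∑ s ∈ Finset.Icc 1 w₁, μ (s, t) = q₂ t)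

/-- Diagonal mass of a coupling. -/
def diagMass (w₁ w₂ : ℕ) (μ : ℕ × ℕ → ℝ) : ℝ :=
  ∑ s ∈ Finset.Icc 1 (min w₁ w₂), μ (s, s)

/-- A maximal coupling: a coupling maximizing the diagonal mass. -/
def IsMaxCoupling (w₁ w₂ : ℕ) (q₁ q₂ : ℕ → ℝ) (μ : ℕ × ℕ → ℝ) : Prop :=
  IsCoupling w₁ w₂ q₁ q₂ μ ∧
    ∀ ν, IsCoupling w₁ w₂ q₁ q₂ ν → diagMass w₁ w₂ ν ≤ diagMass w₁ w₂ μ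

/- ### auxiliary lemmas -/

/-- one-dimensional CDF of the collapsed pmf. -/
lemma sum_collapsePM (q : ℕ → ℝ) {j : ℕ} (hj : 1 ≤ j) (t : ℕ) :
    ∑ a ∈ Icc 1 t, collapsePM j q a = ∑ a ∈ Icc 1 (if j ≤ t then t + 1 else t), q a := by
  unfold collapsePM
  rw [Finset.sum_add_distrib, ← Finset.sum_filter, ← Finset.sum_filter]
  have h1 : (Icc 1 t).filter (fun a => a ≤ j) = Icc 1 (min j t) := by
    ext a; simp only [mem_filter, mem_Icc, le_min_iff]; omega
  have h2 : (Icc 1 t).filter (fun a => j ≤ a) = Icc j t := by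
    ext a; simp only [mem_filter, mem_Icc]; omega
  rw [h1, h2]
  by_cases h : j ≤ t
  · simp only [h, if_true, min_eq_left h]
    have h3 : ∑ a ∈ Icc j t, q (a + 1) = ∑ a ∈ Icc (j+1) (t+1), q a := by
      rw [← map_add_right_Icc j t 1]
      rw [Finset.sum_map]
      rfl
    rw [h3]
    rw [show Icc 1 j = Ioc 0 j from Finset.Icc_add_one_left_eq_Ioc 0 j,
        show Icc (j+1) (t+1) = Ioc j (t+1) from Finset.Icc_add_one_left_eq_Ioc j (t+1),
        show Icc 1 (t+1) = Ioc 0 (t+1) from Finset.Icc_add_one_left_eq_Ioc 0 (t+1)]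
    exact Finset.sum_Ioc_consecutive _ (Nat.zero_le j) (by omega)
  · simp only [h, if_false, min_eq_right (by omega : t ≤ j)]
    rw [show Icc j t = ∅ by rw [Finset.Icc_eq_empty]; omega]
    simp

lemma isPMF_collapse {w j : ℕ} {q : ℕ → ℝ} (hq : IsPMF w q) (hj1 : 1 ≤ j) (hj2 : j ≤ w - 1) :
    IsPMF (w - 1) (collapsePM j q) := by
  obtain ⟨h0, hs, h1⟩ := hq
  have hw : 2 ≤ w := by omega
  refine ⟨fun t => ?_, fun t ht => ?_, ?_⟩
  · unfold collapsePM
    apply add_nonneg <;> split <;> first | exact h0 _ | exact le_rfl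
  · simp only [mem_Icc, not_and_or, not_le] at ht
    unfold collapsePM
    rcases ht with h | h
    · have ht0 : t = 0 := by omega
      subst ht0
      rw [if_neg (show ¬ j ≤ 0 by omega), hs 0 (by simp), if_pos (Nat.zero_le j)]
      simp
    · rw [if_neg (show ¬ t ≤ j by omega), hs (t+1) (by simp only [mem_Icc]; omega)]
      simp
  · rw [sum_collapsePM q hj1 (w - 1), if_pos hj2, show w - 1 + 1 = w by omega]
    exact h1

lemma pmfCDF_collapse {j : ℕ} {q : ℕ → ℝ} (hj1 : 1 ≤ j) (t : ℕ) :
    pmfCDF (collapsePM j q) t = pmfCDF q (if j ≤ t then t + 1 else t) := by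
  unfold pmfCDF; exact sum_collapsePM q hj1 t

/-- CDF only depends on `min s z` for measures supported in the box. -/
lemma jointCDF_min {n : ℕ} (z : Fin n → ℕ) (μ : (Fin n → ℕ) → ℝ)
    (hμ : ∀ s, s ∉ prodBox z → μ s = 0) (s : Fin n → ℕ) :
    jointCDF μ s = jointCDF μ (fun i => min (s i) (z i)) := by
  unfold jointCDF
  rw [← Finset.sum_subset (s₁ := Fintype.piFinset fun i => Icc 1 (min (s i) (z i)))]
  · intro t ht
    simp only [Fintype.mem_piFinset, mem_Icc] at ht ⊢
    intro i; have := ht i; omega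
  · intro t ht hts
    apply hμ
    simp only [Fintype.mem_piFinset, mem_Icc] at ht hts
    simp only [prodBox, Fintype.mem_piFinset, mem_Icc, not_forall]
    obtain ⟨i, hi⟩ := not_forall.mp hts
    refine ⟨i, fun hc => hi ?_⟩
    have := ht i
    omega

/-- Inversion: two signed measures on the box with the same CDF on the box agree. -/
lemma cdf_inj {n : ℕ} (z : Fin n → ℕ) (hz : ∀ i, 1 ≤ z i)
    (μ ν : (Fin n → ℕ) → ℝ)
    (hμ : ∀ s, s ∉ prodBox z → μ s = 0) (hν : ∀ s, s ∉ prodBox z → ν s = 0)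
    (h : ∀ s ∈ prodBox z, jointCDF μ s = jointCDF ν s) :
    ∀ s, μ s = ν s := by
  have h' : ∀ s : Fin n → ℕ, jointCDF μ s = jointCDF ν s := by
    intro s
    rw [jointCDF_min z μ hμ s, jointCDF_min z ν hν s]
    by_cases hs : ∀ i, 1 ≤ min (s i) (z i)
    · refine h _ ?_
      simp only [prodBox, Fintype.mem_piFinset, mem_Icc]
      exact fun i => ⟨hs i, min_le_right _ _⟩
    · push_neg at hs
      obtain ⟨i, hi⟩ := hs
      unfold jointCDF
      rw [Finset.sum_eq_zero, Finset.sum_eq_zero]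
      · intro t ht
        apply hν; simp only [Fintype.mem_piFinset, mem_Icc] at ht ⊢
        simp only [prodBox, Fintype.mem_piFinset, mem_Icc]
        push_neg; refine ⟨i, fun h1 => ?_⟩
        have := ht i; omega
      · intro t ht
        apply hμ; simp only [Fintype.mem_piFinset, mem_Icc] at ht ⊢
        simp only [prodBox, Fintype.mem_piFinset, mem_Icc]
        push_neg; refine ⟨i, fun h1 => ?_⟩
        have := ht i; omega
  -- strong induction on the total sum
  suffices H : ∀ N (s : Fin n → ℕ), ∑ i, s i = N → μ s = ν s from fun s => H _ s rfl
  intro N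
  induction N using Nat.strong_induction_on with
  | _ N ih =>
  intro s hN
  subst hN
  by_cases hs : ∀ i, 1 ≤ s i
  · -- s ∈ its own box; extract μ s from the CDF
    have hmem : s ∈ Fintype.piFinset fun i => Icc 1 (s i) := by
      simp only [Fintype.mem_piFinset, mem_Icc]; exact fun i => ⟨hs i, le_refl _⟩
    have key : ∀ (ρ : (Fin n → ℕ) → ℝ), jointCDF ρ s =
        ρ s + ∑ t ∈ (Fintype.piFinset fun i => Icc 1 (s i)).erase s, ρ t := by
      intro ρ
      unfold jointCDF
      rw [← Finset.add_sum_erase _ _ hmem]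
    have hμs := key μ
    have hνs := key ν
    rw [h' s] at hμs
    have hsum : ∑ t ∈ (Fintype.piFinset fun i => Icc 1 (s i)).erase s, μ t =
        ∑ t ∈ (Fintype.piFinset fun i => Icc 1 (s i)).erase s, ν t := by
      apply Finset.sum_congr rfl
      intro t ht
      rw [Finset.mem_erase, Fintype.mem_piFinset] at ht
      obtain ⟨hts, htm⟩ := ht
      have hlt : ∑ i, t i < ∑ i, s i := by
        have hle : ∀ i, t i ≤ s i := fun i => (mem_Icc.mp (htm i)).2
        have hne : ∃ i, t i ≠ s i := by
          by_contra hc; push_neg at hc; exact hts (funext hc)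
        obtain ⟨i, hi⟩ := hne
        exact Finset.sum_lt_sum (fun i _ => hle i) ⟨i, Finset.mem_univ i, by
          have := hle i; omega⟩
      exact ih _ hlt t rfl
    have := hμs.symm.trans hνs
    rw [hsum] at this
    linarith
  · push_neg at hs
    obtain ⟨i, hi⟩ := hs
    rw [hμ s, hν s] <;>
    · simp only [prodBox, Fintype.mem_piFinset, mem_Icc]
      push_neg; exact ⟨i, fun h1 => absurd h1 (by omega)⟩

/-- CDF of the "split" function. -/
lemma jointCDF_split {n : ℕ} (F : (Fin n → ℕ) → ℝ) (i : Fin n) {j : ℕ} (hj : 1 ≤ j) (s : Fin n → ℕ) :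
    jointCDF (fun u => (if u i ≤ j then F u else 0) +
        (if j ≤ u i then F (Function.update u i (u i + 1)) else 0)) s =
      jointCDF F (Function.update s i (if j ≤ s i then s i + 1 else s i)) := by
  unfold jointCDF
  rw [Finset.sum_add_distrib, ← Finset.sum_filter, ← Finset.sum_filter]
  have hmem : ∀ (m : ℕ) (u : Fin n → ℕ),
      u ∈ (Fintype.piFinset fun k => Icc 1 (Function.update s i m k)) ↔
        ∀ k, 1 ≤ u k ∧ u k ≤ (if k = i then m else s k) := by
    intro m u
    simp only [Fintype.mem_piFinset, mem_Icc, Function.update_apply]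
  by_cases hsj : j ≤ s i
  · rw [if_pos hsj]
    rw [← Finset.sum_filter_add_sum_filter_not
        (Fintype.piFinset fun k => Icc 1 (Function.update s i (s i + 1) k)) (fun u => u i ≤ j) F]
    congr 1
    · -- parts with u i ≤ j coincide
      apply Finset.sum_congr _ (fun _ _ => rfl)
      ext u
      simp only [mem_filter, Fintype.mem_piFinset, mem_Icc, Function.update_apply]
      constructor
      · rintro ⟨hu, huj⟩
        refine ⟨fun k => ?_, huj⟩
        have := hu k
        rcases eq_or_ne k i with hk | hk
        · simp only [hk, if_pos rfl, if_true, eq_self_iff_true]; rw [hk] at this; omega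
        · simpa [hk] using this
      · rintro ⟨hu, huj⟩
        refine ⟨fun k => ?_, huj⟩
        have := hu k
        rcases eq_or_ne k i with hk | hk
        · simp only [hk, if_pos rfl, if_true, eq_self_iff_true] at this; rw [hk]; omega
        · simpa [hk] using this
    · -- bijection u ↦ update u i (u i + 1)
      apply Finset.sum_nbij' (fun u => Function.update u i (u i + 1))
        (fun u => Function.update u i (u i - 1))
      · intro a ha
        simp only [mem_filter, Fintype.mem_piFinset, mem_Icc, Function.update_apply, not_le] at ha ⊢
        obtain ⟨hu, huj⟩ := ha
        refine ⟨fun k => ?_, ?_⟩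
        · have := hu k
          rcases eq_or_ne k i with hk | hk
          · simp only [hk, if_pos rfl, if_true, eq_self_iff_true]; rw [hk] at this; omega
          · simpa [hk] using this
        · simp only [if_pos rfl, if_true, eq_self_iff_true]; omega
      · intro a ha
        simp only [mem_filter, Fintype.mem_piFinset, mem_Icc, Function.update_apply, not_le] at ha ⊢
        obtain ⟨hu, huj⟩ := ha
        have hai := hu i
        simp only [if_pos rfl, if_true, eq_self_iff_true] at hai
        refine ⟨fun k => ?_, ?_⟩
        · have := hu k
          rcases eq_or_ne k i with hk | hk
          · simp only [hk, if_pos rfl, if_true, eq_self_iff_true]; rw [hk] at this; simp only [if_pos rfl, if_true, eq_self_iff_true] at this; omega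
          · simpa [hk] using this
        · simp only [if_pos rfl, if_true, eq_self_iff_true]; omega
      · intro a _
        funext k
        rcases eq_or_ne k i with hk | hk
        · subst hk; simp [Function.update]
        · simp [Function.update_apply, hk]
      · intro a ha
        simp only [mem_filter, Fintype.mem_piFinset, mem_Icc, Function.update_apply, not_le] at ha
        have hai := ha.1 i
        simp only [if_pos rfl, if_true, eq_self_iff_true] at hai
        funext k
        rcases eq_or_ne k i with hk | hk
        · subst hk; simp only [Function.update_self]; omega
        · simp [Function.update_apply, hk]
      · intro a _; rfl
  · rw [if_neg hsj, Function.update_eq_self]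
    push_neg at hsj
    rw [Finset.sum_eq_zero (s := (Fintype.piFinset fun k => Icc 1 (s k)).filter fun u => j ≤ u i)
      (by intro u hu
          simp only [mem_filter, Fintype.mem_piFinset, mem_Icc] at hu
          exact absurd (le_trans hu.2 (hu.1 i).2) (by omega)), add_zero]
    apply Finset.sum_congr _ (fun _ _ => rfl)
    rw [Finset.filter_true_of_mem]
    intro u hu
    simp only [Fintype.mem_piFinset, mem_Icc] at hu
    have := (hu i).2; omega

/-- every copula model satisfies Invariant Aggregation. -/
theorem copulaModel_satisfiesIA (n : ℕ) (f : Model n) (C : (Fin n → ℝ) → ℝ)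
    (hf : IsModel f) (hC : IsCopulaModelWith f C) :
    SatisfiesIA f := by
  intro z p hp i j hj s hsmem
  simp only [mem_Icc] at hj
  obtain ⟨hj1, hj2⟩ := hj
  set z' := Function.update z i (z i - 1) with hz'
  set p' := Function.update p i (collapsePM j (p i)) with hp'
  have hzi2 : 2 ≤ z i := by
    have := (hp i).2.2
    by_contra hc
    push_neg at hc
    interval_cases h : z i <;> omega
  have hp'pmf : ∀ k, IsPMF (z' k) (p' k) := by
    intro k
    by_cases hk : k = i
    · subst hk
      simp only [hz', hp', Function.update_self]
      exact isPMF_collapse (hp k) hj1 hj2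
    · simp only [hz', hp', Function.update_of_ne hk]
      exact hp k
  have hz1 : ∀ k, 1 ≤ z' k := by
    intro k
    have := (hp'pmf k).2.2
    by_contra hc
    push_neg at hc
    interval_cases h : z' k
    simp at this
  -- the RHS function
  set g : (Fin n → ℕ) → ℝ := fun u =>
    (if u i ≤ j then f z p u else 0) +
      (if j ≤ u i then f z p (Function.update u i (u i + 1)) else 0) with hg
  have hFsupp : ∀ u, u ∉ prodBox z → f z p u = 0 := (hf z p hp).1.2.1
  have hμsupp : ∀ u, u ∉ prodBox z' → f z' p' u = 0 := (hf z' p' hp'pmf).1.2.1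
  have hgsupp : ∀ u, u ∉ prodBox z' → g u = 0 := by
    intro u hu
    simp only [hg]
    simp only [prodBox, Fintype.mem_piFinset, mem_Icc, not_forall] at hu
    obtain ⟨k, hk⟩ := hu
    by_cases hki : k = i
    · subst hki
      have hzk : z' k = z k - 1 := by simp [hz']
      rcases Nat.lt_or_ge (u k) 1 with h0 | h1
      · rw [if_neg (show ¬ j ≤ u k by omega),
          hFsupp u (by
            simp only [prodBox, Fintype.mem_piFinset, mem_Icc, not_forall]
            exact ⟨k, by omega⟩)]
        simp
      · have h2 : z k - 1 < u k := by omega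
        rw [if_neg (by omega)]
        rw [hFsupp (Function.update u k (u k + 1)) (by
          simp only [prodBox, Fintype.mem_piFinset, mem_Icc, not_forall]
          exact ⟨k, by simp [Function.update]; omega⟩)]
        simp
    · have hzk : z' k = z k := by simp [hz', hki]
      rw [hFsupp u (by
        simp only [prodBox, Fintype.mem_piFinset, mem_Icc, not_forall]
        exact ⟨k, by omega⟩)]
      rw [hFsupp (Function.update u i (u i + 1)) (by
        simp only [prodBox, Fintype.mem_piFinset, mem_Icc, not_forall]
        refine ⟨k, ?_⟩
        simp [Function.update, hki]; omega)]
      simp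
  -- CDFs agree on the box
  have hcdf : ∀ t ∈ prodBox z', jointCDF (f z' p') t = jointCDF g t := by
    intro t ht
    have h1 : jointCDF (f z' p') t = C fun k => pmfCDF (p' k) (t k) :=
      hC.2 z' p' hp'pmf t ht
    set t' := Function.update t i (if j ≤ t i then t i + 1 else t i) with ht'
    have ht'mem : t' ∈ prodBox z := by
      simp only [prodBox, Fintype.mem_piFinset, mem_Icc] at ht ⊢
      intro k
      by_cases hk : k = i
      · subst hk
        have := ht k
        simp only [hz', Function.update_self] at this
        simp only [ht', Function.update_self]
        split <;> omega
      · have := ht k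
        simp only [hz', Function.update_of_ne hk] at this
        simpa [ht', Function.update_of_ne hk] using this
    have h2 : (fun k => pmfCDF (p' k) (t k)) = fun k => pmfCDF (p k) (t' k) := by
      funext k
      by_cases hk : k = i
      · subst hk
        simp only [hp', Function.update_self, ht']
        exact pmfCDF_collapse hj1 (t k)
      · simp only [hp', Function.update_of_ne hk, ht', Function.update_of_ne hk]
    have h3 : C (fun k => pmfCDF (p k) (t' k)) = jointCDF (f z p) t' :=
      (hC.2 z p hp t' ht'mem).symm
    have h4 : jointCDF g t = jointCDF (f z p) t' := jointCDF_split (f z p) i hj1 t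
    rw [h1, h2, h3, h4]
  have := cdf_inj z' hz1 (f z' p') g hμsupp hgsupp hcdf s
  exact this
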